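/- Let L be a finite lattice and f : L^n → ℝ submodular. Define f'(x) = min over all y ≤ x of f(y). Then f' is submodular. -/
import Mathlib


/-- f'(x) = min_{y ≤ x} f(y) is submodular whenever f is. -/
theorem stmt1 {L : Type} [Lattice L] [Fintype L] {n : ℕ}
    (f : (Fin n → L) → ℝ)
    (hf : ∀ a b : Fin n → L, f (a ⊓ b) + f (a ⊔ b) ≤ f a + f b)
    (f' : (Fin n → L) → ℝ)
    (hf' : ∀ x : Fin n → L, f' x = sInf (f '' {y | y ≤ x})) :
    ∀ a b : Fin n → L, f' (a ⊓ b) + f' (a ⊔ b) ≤ f' a + f' b := by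
  intro a b
  have hfin : ∀ x : Fin n → L, (f '' {y | y ≤ x}).Finite := fun x =>
    (Set.finite_univ.subset (Set.subset_univ _)).image f
  have hne : ∀ x : Fin n → L, (f '' {y | y ≤ x}).Nonempty := fun x =>
    ⟨f x, x, le_refl x, rfl⟩
  have hmem : ∀ x : Fin n → L, ∃ y, y ≤ x ∧ f' x = f y := by
    intro x
    have := (hne x).csInf_mem (hfin x)
    rw [← hf' x] at this
    obtain ⟨y, hy, hfy⟩ := this
    exact ⟨y, hy, hfy.symm⟩
  have hle : ∀ (x y : Fin n → L), y ≤ x → f' x ≤ f y := by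
    intro x y hyx
    rw [hf' x]
    exact csInf_le ((hfin x).bddBelow) ⟨y, hyx, rfl⟩
  obtain ⟨ya, hya, hfa⟩ := hmem a
  obtain ⟨yb, hyb, hfb⟩ := hmem b
  calc f' (a ⊓ b) + f' (a ⊔ b)
      ≤ f (ya ⊓ yb) + f (ya ⊔ yb) := by
        gcongr
        · exact hle _ _ (inf_le_inf hya hyb)
        · exact hle _ _ (sup_le_sup hya hyb)
    _ ≤ f ya + f yb := hf ya yb
    _ = f' a + f' b := by rw [hfa, hfb]
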